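/- For a commutative ring R and α, β ∈ R, the Riordan array identity ((1-βx)/(1+αx), x(1-βx)/(1+αx)) = (1, x/(1-βx)) · (1/(1+(α+β)x), x/((1+βx)(1+(α+β)x))) holds; equivalently, writing f(x)=x/(1-βx) and g(x)=x/((1+βx)(1+(α+β)x)), one has (1/(1+(α+β)f(x))) = (1-βx)/(1+αx) and g(f(x)) = x(1-βx)/(1+αx) as formal power series. -/

import Mathlib

open PowerSeries

lemma invOfUnit_eq_of_mul_eq_one {R : Type*} [CommRing R] (a b : PowerSeries R)
    (h1 : PowerSeries.constantCoeff (R := R) a = 1) (h2 : a * b = 1) :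
    PowerSeries.invOfUnit a 1 = b := by
  have := PowerSeries.mul_invOfUnit a 1 (by simpa using h1)
  calc PowerSeries.invOfUnit a 1 = PowerSeries.invOfUnit a 1 * (a * b) := by rw [h2, mul_one]
    _ = (a * PowerSeries.invOfUnit a 1) * b := by ring
    _ = b := by rw [this, one_mul]

/-- Riordan array factorization
`((1-βx)/(1+αx), x(1-βx)/(1+αx)) = (1, x/(1-βx)) · (1/(1+(α+β)x), x/((1+βx)(1+(α+β)x)))`:
with `f(x) = x/(1-βx)`, one has `1/(1+(α+β)f(x)) = (1-βx)/(1+αx)` and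
`f(x)/((1+βf(x))(1+(α+β)f(x))) = x(1-βx)/(1+αx)`. -/
theorem riordan_factorization {R : Type*} [CommRing R] (α β : R)
    (f : PowerSeries R)
    (hf : f = PowerSeries.X * PowerSeries.invOfUnit (1 - (PowerSeries.C (R := R)) β * PowerSeries.X) 1) :
    PowerSeries.invOfUnit (1 + (PowerSeries.C (R := R)) (α + β) * f) 1 =
        (1 - (PowerSeries.C (R := R)) β * PowerSeries.X) *
          PowerSeries.invOfUnit (1 + (PowerSeries.C (R := R)) α * PowerSeries.X) 1 ∧
    f * PowerSeries.invOfUnit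
          ((1 + (PowerSeries.C (R := R)) β * f) * (1 + (PowerSeries.C (R := R)) (α + β) * f)) 1 =
        PowerSeries.X * (1 - (PowerSeries.C (R := R)) β * PowerSeries.X) *
          PowerSeries.invOfUnit (1 + (PowerSeries.C (R := R)) α * PowerSeries.X) 1 := by
  set u : PowerSeries R := 1 - (PowerSeries.C (R := R)) β * PowerSeries.X with hu
  have hcu : PowerSeries.constantCoeff (R := R) u = 1 := by simp [hu]
  have huinv : u * PowerSeries.invOfUnit u 1 = 1 :=
    PowerSeries.mul_invOfUnit u 1 (by simpa using hcu)
  -- f * u = X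
  have hfu : f * u = PowerSeries.X := by
    rw [hf]
    calc PowerSeries.X * PowerSeries.invOfUnit u 1 * u
        = PowerSeries.X * (u * PowerSeries.invOfUnit u 1) := by ring
      _ = PowerSeries.X := by rw [huinv, mul_one]
  have hcf : PowerSeries.constantCoeff (R := R) f = 0 := by
    rw [hf]; simp
  have hvinv : (1 + (PowerSeries.C (R := R)) α * PowerSeries.X) *
      PowerSeries.invOfUnit (1 + (PowerSeries.C (R := R)) α * PowerSeries.X) 1 = 1 :=
    PowerSeries.mul_invOfUnit _ 1 (by simp)
  -- (1+(α+β)f) * u = 1 + αX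
  have key : (1 + (PowerSeries.C (R := R)) (α + β) * f) * u = 1 + (PowerSeries.C (R := R)) α * PowerSeries.X := by
    have : (1 + (PowerSeries.C (R := R)) (α + β) * f) * u
        = u + (PowerSeries.C (R := R)) (α + β) * (f * u) := by ring
    rw [this, hfu, hu, map_add]
    ring
  have key2 : (1 + (PowerSeries.C (R := R)) β * f) * u = 1 := by
    have : (1 + (PowerSeries.C (R := R)) β * f) * u = u + (PowerSeries.C (R := R)) β * (f * u) := by ring
    rw [this, hfu, hu]; ring
  constructor
  · apply invOfUnit_eq_of_mul_eq_one
    · simp [hcf]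
    · calc (1 + (PowerSeries.C (R := R)) (α + β) * f) *
          (u * PowerSeries.invOfUnit (1 + (PowerSeries.C (R := R)) α * PowerSeries.X) 1)
          = ((1 + (PowerSeries.C (R := R)) (α + β) * f) * u) *
            PowerSeries.invOfUnit (1 + (PowerSeries.C (R := R)) α * PowerSeries.X) 1 := by ring
        _ = 1 := by rw [key, hvinv]
  · have hinv2 : PowerSeries.invOfUnit
        ((1 + (PowerSeries.C (R := R)) β * f) * (1 + (PowerSeries.C (R := R)) (α + β) * f)) 1 =
        u * (u * PowerSeries.invOfUnit (1 + (PowerSeries.C (R := R)) α * PowerSeries.X) 1) := by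
      apply invOfUnit_eq_of_mul_eq_one
      · simp [hcf]
      · calc (1 + (PowerSeries.C (R := R)) β * f) * (1 + (PowerSeries.C (R := R)) (α + β) * f) *
            (u * (u * PowerSeries.invOfUnit (1 + (PowerSeries.C (R := R)) α * PowerSeries.X) 1))
            = ((1 + (PowerSeries.C (R := R)) β * f) * u) * (((1 + (PowerSeries.C (R := R)) (α + β) * f) * u) *
              PowerSeries.invOfUnit (1 + (PowerSeries.C (R := R)) α * PowerSeries.X) 1) := by ring
          _ = 1 := by rw [key2, key, hvinv, one_mul]
    rw [hinv2]
    calc f * (u * (u * PowerSeries.invOfUnit (1 + (PowerSeries.C (R := R)) α * PowerSeries.X) 1))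
        = (f * u) * u * PowerSeries.invOfUnit (1 + (PowerSeries.C (R := R)) α * PowerSeries.X) 1 := by ring
      _ = PowerSeries.X * u * PowerSeries.invOfUnit (1 + (PowerSeries.C (R := R)) α * PowerSeries.X) 1 := by
          rw [hfu]
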